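/- arXiv:2411.14990 — 3 statements merged into one kernel-verified Lean document; each statement's English description precedes it below -/
import Mathlib

section
/- For κ ≥ 2, the binomial coefficient C(β+κ, 2κ−1)·2^(2κ−1) is divisible by 2^(γ+1), where γ = ord₂(2(β+1)) and β ≥ κ − 1. Equivalently: ord₂(C(β+κ, 2κ−1)) + 2κ − 1 ≥ ord₂(2(β+1)) + 1. -/
open Nat

private lemma v2_factorial_lt : ∀ n : ℕ, 0 < n → padicValNat 2 (n !) < n := by
  intro n
  induction n using Nat.strong_induction_on with
  | _ n ih =>
    intro hn
    have h2 : Fact (Nat.Prime 2) := ⟨Nat.prime_two⟩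
    have hq : n = 2 * (n / 2) + n % 2 := (Nat.div_add_mod n 2).symm ▸ rfl
    have hmod : n % 2 < 2 := Nat.mod_lt _ (by norm_num)
    have key : padicValNat 2 (n !) = padicValNat 2 ((n / 2) !) + n / 2 := by
      calc padicValNat 2 (n !) = padicValNat 2 ((2 * (n / 2) + n % 2) !) := by rw [← hq]
        _ = padicValNat 2 ((2 * (n / 2)) !) := padicValNat_factorial_mul_add _ hmod
        _ = padicValNat 2 ((n / 2) !) + n / 2 := padicValNat_factorial_mul _
    rcases Nat.eq_zero_or_pos (n / 2) with h0 | hpos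
    · rw [key, h0]
      simp only [Nat.factorial_zero, Nat.factorial_one]
      have : padicValNat 2 1 = 0 := padicValNat.one
      omega
    · have := ih (n / 2) (Nat.div_lt_self hn (by norm_num)) hpos
      omega

theorem stmt_16 (β κ : ℕ) (hκ : 2 ≤ κ) (hβ : κ - 1 ≤ β) :
    2 ^ (padicValNat 2 (2 * (β + 1)) + 1) ∣
      Nat.choose (β + κ) (2 * κ - 1) * 2 ^ (2 * κ - 1) ∧
    padicValNat 2 (Nat.choose (β + κ) (2 * κ - 1)) + (2 * κ - 1) ≥
      padicValNat 2 (2 * (β + 1)) + 1 := by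
  have h2 : Fact (Nat.Prime 2) := ⟨Nat.prime_two⟩
  have hkn : 2 * κ - 1 ≤ β + κ := by omega
  have hCpos : 0 < Nat.choose (β + κ) (2 * κ - 1) := Nat.choose_pos hkn
  -- (β+1) divides the descending factorial
  have hdvd : (β + 1) ∣ (β + κ).descFactorial (2 * κ - 1) := by
    rw [Nat.descFactorial_eq_prod_range]
    have hmem : κ - 1 ∈ Finset.range (2 * κ - 1) := Finset.mem_range.2 (by omega)
    have : β + κ - (κ - 1) = β + 1 := by omega
    exact this ▸ Finset.dvd_prod_of_mem _ hmem
  rw [Nat.descFactorial_eq_factorial_mul_choose] at hdvd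
  have hfactne : (2 * κ - 1)! ≠ 0 := Nat.factorial_ne_zero _
  have hprodne : (2 * κ - 1)! * Nat.choose (β + κ) (2 * κ - 1) ≠ 0 :=
    Nat.mul_ne_zero hfactne hCpos.ne'
  have hle : padicValNat 2 (β + 1) ≤
      padicValNat 2 ((2 * κ - 1)! * Nat.choose (β + κ) (2 * κ - 1)) :=
    (padicValNat_dvd_iff_le hprodne).1 (dvd_trans pow_padicValNat_dvd hdvd)
  rw [padicValNat.mul hfactne hCpos.ne'] at hle
  -- bound valuation of (2κ-1)!
  have hodd : padicValNat 2 ((2 * κ - 1)!) = padicValNat 2 ((2 * κ - 2)!) := by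
    have he : 2 * κ - 1 = (2 * κ - 2) + 1 := by omega
    rw [he, Nat.factorial_succ,
      padicValNat.mul (by omega) (Nat.factorial_ne_zero _),
      padicValNat.eq_zero_of_not_dvd (by omega)]
    ring
  have hvf : padicValNat 2 ((2 * κ - 2)!) < 2 * κ - 2 :=
    v2_factorial_lt _ (by omega)
  -- valuation of 2*(β+1)
  have hval2 : padicValNat 2 (2 * (β + 1)) = 1 + padicValNat 2 (β + 1) := by
    rw [padicValNat.mul (by norm_num) (by omega), padicValNat.self (by norm_num)]
  have hineq : padicValNat 2 (Nat.choose (β + κ) (2 * κ - 1)) + (2 * κ - 1) ≥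
      padicValNat 2 (2 * (β + 1)) + 1 := by omega
  refine ⟨?_, hineq⟩
  rw [padicValNat_dvd_iff_le (by positivity), padicValNat.mul hCpos.ne' (by positivity),
    padicValNat.prime_pow]
  omega
end

section
/- For every prime p ≡ 1 (mod 12) with p = x² + y² (x odd) and p = z² + 3w² (z odd), the integer [2p⁶ − 144p⁵x² + 1680p⁴x⁴ − 7168p³x⁶ + 13824p²x⁸ − 12288px¹⁰ + 4096x¹²] − [2p⁶ − 144p⁵z² + 1680p⁴z⁴ − 7168p³z⁶ + 13824p²z⁸ − 12288pz¹⁰ + 4096z¹²] is nonzero. -/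
theorem stmt_18 (p : ℕ) (hp : p.Prime) (hp12 : p % 12 = 1)
    (x y z w : ℤ) (hx : Odd x) (hz : Odd z)
    (hxy : (p : ℤ) = x ^ 2 + y ^ 2) (hzw : (p : ℤ) = z ^ 2 + 3 * w ^ 2) :
    (2 * (p : ℤ) ^ 6 - 144 * (p : ℤ) ^ 5 * x ^ 2 + 1680 * (p : ℤ) ^ 4 * x ^ 4
      - 7168 * (p : ℤ) ^ 3 * x ^ 6 + 13824 * (p : ℤ) ^ 2 * x ^ 8
      - 12288 * (p : ℤ) * x ^ 10 + 4096 * x ^ 12) -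
    (2 * (p : ℤ) ^ 6 - 144 * (p : ℤ) ^ 5 * z ^ 2 + 1680 * (p : ℤ) ^ 4 * z ^ 4
      - 7168 * (p : ℤ) ^ 3 * z ^ 6 + 13824 * (p : ℤ) ^ 2 * z ^ 8
      - 12288 * (p : ℤ) * z ^ 10 + 4096 * z ^ 12) ≠ 0 := by
  set P : ℤ := (p : ℤ) with hP
  -- the odd part
  have hpodd : Odd P := by
    have h2 : p % 2 = 1 := by omega
    exact (Int.odd_coe_nat p).mpr (Nat.odd_iff.mpr h2)
  set T : ℤ := -224*P^3*(x^4+x^2*z^2+z^4) + 432*P^2*(x^6+x^4*z^2+x^2*z^4+z^6)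
      - 384*P*(x^8+x^6*z^2+x^4*z^4+x^2*z^6+z^8)
      + 128*(x^10+x^8*z^2+x^6*z^4+x^4*z^6+x^2*z^8+z^10) with hT
  set M : ℤ := -144*P^5 + 1680*P^4*(x^2+z^2) + 32*T with hM
  have hD : (2 * P ^ 6 - 144 * P ^ 5 * x ^ 2 + 1680 * P ^ 4 * x ^ 4
      - 7168 * P ^ 3 * x ^ 6 + 13824 * P ^ 2 * x ^ 8
      - 12288 * P * x ^ 10 + 4096 * x ^ 12) -
    (2 * P ^ 6 - 144 * P ^ 5 * z ^ 2 + 1680 * P ^ 4 * z ^ 4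
      - 7168 * P ^ 3 * z ^ 6 + 13824 * P ^ 2 * z ^ 8
      - 12288 * P * z ^ 10 + 4096 * z ^ 12) = (x^2 - z^2) * M := by
    rw [hM, hT]; ring
  -- M ≡ 16 mod 32
  have h1 : (2:ℤ) ∣ 9*P^5 + 1 := by
    have : Odd (9*P^5) := (by decide : Odd (9:ℤ)).mul (hpodd.pow)
    obtain ⟨k, hk⟩ := this
    exact ⟨k+1, by omega⟩
  have h2 : (2:ℤ) ∣ x^2 + z^2 := by
    have : Even (x^2 + z^2) := (hx.pow).add_odd (hz.pow)
    exact this.two_dvd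
  obtain ⟨c, hc⟩ := h1
  obtain ⟨d, hd⟩ := h2
  have hM16 : (32:ℤ) ∣ M - 16 := ⟨-c + 105*P^4*d + T, by
    rw [hM]; linear_combination (-16:ℤ)*hc + 1680*P^4*hd⟩
  have hMne : M ≠ 0 := by
    intro h
    rw [h] at hM16
    omega
  have hxz : x^2 - z^2 ≠ 0 := by
    intro h
    have hyw : y^2 = 3*w^2 := by linarith
    rcases eq_or_ne w 0 with hw | hw
    · have hy : y = 0 := by nlinarith [sq_nonneg y]
      have hpx : P = x^2 := by rw [hxy, hy]; ring
      have hpn : p = x.natAbs ^ 2 := by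
        have := congrArg Int.natAbs hpx
        simpa [hP, Int.natAbs_pow] using this
      have hdvd : x.natAbs ∣ p := ⟨x.natAbs, by rw [hpn]; ring⟩
      rcases hp.eq_one_or_self_of_dvd _ hdvd with h1 | h1
      · rw [h1] at hpn; simp at hpn; exact hp.one_lt.ne' hpn
      · rw [h1] at hpn
        have := hp.two_le
        nlinarith
    · have hm : y.natAbs ^ 2 = 3 * w.natAbs ^ 2 := by
        have := congrArg Int.natAbs hyw
        simpa [Int.natAbs_mul, Int.natAbs_pow] using this
      have hn0 : w.natAbs ≠ 0 := Int.natAbs_ne_zero.mpr hw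
      have hm0 : y.natAbs ≠ 0 := by
        intro h0
        rw [h0] at hm
        simp at hm
        exact hn0 (by simpa using hm)
      have h3 : Nat.Prime 3 := by norm_num
      have hfac := congrArg (fun n => n.factorization 3) hm
      simp [Nat.factorization_pow, Nat.factorization_mul (by norm_num : (3:ℕ) ≠ 0)
        (pow_ne_zero 2 hn0), h3.factorization_self] at hfac
      omega
  rw [hD]
  exact mul_ne_zero hxz hMne
end

section
/- Let β ≥ 2 and 2 ≤ κ ≤ β. Then ord₂(C(β+κ, 2κ)·2^(2κ)) ≥ ord₂(2β(β+1)) + κ − 1; in particular C(β+κ, 2κ)·2^(2κ) is divisible by 2^(δ+1) where δ = ord₂(2β(β+1)). -/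
open Finset

lemma digitsum_pos : ∀ n : ℕ, 0 < n → 0 < (Nat.digits 2 n).sum := by
  intro n
  induction n using Nat.strong_induction_on with
  | _ n ih =>
    intro hn
    rw [Nat.digits_def' (by norm_num) hn]
    simp only [List.sum_cons]
    rcases Nat.even_or_odd n with he | ho
    · have he' : n % 2 = 0 := Nat.even_iff.mp he
      have h2 : 0 < n / 2 := Nat.div_pos (by omega) (by norm_num)
      have := ih (n / 2) (by omega) h2
      omega
    · have : n % 2 = 1 := Nat.odd_iff.mp ho
      omega

lemma asc_eq_prod (m : ℕ) : ∀ k, (m + 1).ascFactorial k = ∏ i ∈ range k, (m + 1 + i) := by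
  intro k
  induction k with
  | zero => simp
  | succ k ih => rw [Nat.ascFactorial_succ, prod_range_succ, ih, mul_comm]

lemma padic_prod (f : ℕ → ℕ) : ∀ n, (∀ i < n, 0 < f i) →
    padicValNat 2 (∏ i ∈ range n, f i) = ∑ i ∈ range n, padicValNat 2 (f i) := by
  intro n
  induction n with
  | zero => simp
  | succ n ih =>
    intro h
    rw [prod_range_succ, sum_range_succ, padicValNat.mul, ih (fun i hi => h i (by omega))]
    · exact (prod_pos (fun i hi => h i (by simp at hi; omega))).ne'
    · exact (h n (by omega)).ne'

lemma pair_val {a b : ℕ} (ha : 0 < a) (hb : 0 < b) (hodd : ¬ 2 ∣ (a + b)) :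
    1 ≤ padicValNat 2 a + padicValNat 2 b := by
  have : 2 ∣ a ∨ 2 ∣ b := by omega
  rcases this with h | h
  · have := one_le_padicValNat_of_dvd ha.ne' h
    omega
  · have := one_le_padicValNat_of_dvd hb.ne' h
    omega

theorem stmt_19 (β κ : ℕ) (hβ : 2 ≤ β) (hκ : 2 ≤ κ) (hκβ : κ ≤ β) :
    padicValNat 2 (Nat.choose (β + κ) (2 * κ) * 2 ^ (2 * κ)) ≥
      padicValNat 2 (2 * β * (β + 1)) + κ - 1 ∧
    2 ^ (padicValNat 2 (2 * β * (β + 1)) + 1) ∣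
      Nat.choose (β + κ) (2 * κ) * 2 ^ (2 * κ) := by
  have hfact : Fact (Nat.Prime 2) := ⟨Nat.prime_two⟩
  set m := β - κ with hm
  have hmβ : m + κ = β := by omega
  -- choose * (2κ)! = ascFactorial
  have h1 := Nat.choose_mul_factorial_mul_factorial (show 2 * κ ≤ β + κ by omega)
  have h2 := Nat.factorial_mul_ascFactorial m (2 * κ)
  have hsub : β + κ - 2 * κ = m := by omega
  have hadd : m + 2 * κ = β + κ := by omega
  rw [hsub] at h1
  rw [hadd] at h2
  have hasc : Nat.choose (β + κ) (2 * κ) * Nat.factorial (2 * κ) = (m + 1).ascFactorial (2 * κ) := by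
    have := h1.trans h2.symm
    have h3 : Nat.factorial m * (Nat.choose (β + κ) (2 * κ) * Nat.factorial (2 * κ)) =
        Nat.factorial m * (m + 1).ascFactorial (2 * κ) := by ring_nf; ring_nf at this; linarith [this]
    exact Nat.eq_of_mul_eq_mul_left (Nat.factorial_pos m) h3
  -- valuation of ascFactorial as a sum
  have hprod : (m + 1).ascFactorial (2 * κ) = ∏ i ∈ range (2 * κ), (m + 1 + i) :=
    asc_eq_prod m (2 * κ)
  have hvasc : padicValNat 2 ((m + 1).ascFactorial (2 * κ)) =
      ∑ i ∈ range (2 * κ), padicValNat 2 (m + 1 + i) := by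
    rw [hprod]; exact padic_prod _ _ (fun i _ => by omega)
  -- split and reflect the sum
  have hsplit : ∑ i ∈ range (2 * κ), padicValNat 2 (m + 1 + i) =
      ∑ i ∈ range κ, (padicValNat 2 (β - i) + padicValNat 2 (β + 1 + i)) := by
    have h2κ : 2 * κ = κ + κ := by omega
    rw [h2κ, sum_range_add, ← sum_range_reflect (fun i => padicValNat 2 (m + 1 + i)) κ,
      ← sum_add_distrib]
    refine sum_congr rfl (fun i hi => ?_)
    simp only [mem_range] at hi
    congr 2 <;> omega
  -- lower bound on the paired sum
  have hbound : padicValNat 2 β + padicValNat 2 (β + 1) + (κ - 1) ≤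
      ∑ i ∈ range κ, (padicValNat 2 (β - i) + padicValNat 2 (β + 1 + i)) := by
    have hκ1 : κ = (κ - 1) + 1 := by omega
    rw [hκ1, sum_range_succ']
    have hone : ∀ i ∈ range (κ - 1),
        1 ≤ padicValNat 2 (β - (i + 1)) + padicValNat 2 (β + 1 + (i + 1)) := by
      intro i hi
      simp only [mem_range] at hi
      exact pair_val (by omega) (by omega) (by omega)
    have hsum : (κ - 1) * 1 ≤ ∑ i ∈ range (κ - 1),
        (padicValNat 2 (β - (i + 1)) + padicValNat 2 (β + 1 + (i + 1))) := by
      calc (κ - 1) * 1 = ∑ _i ∈ range (κ - 1), 1 := by simp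
        _ ≤ _ := sum_le_sum hone
    simp only [Nat.sub_zero, Nat.add_zero]
    omega
  -- valuation of (2κ)!
  have hvfac : padicValNat 2 (Nat.factorial (2 * κ)) = 2 * κ - (Nat.digits 2 (2 * κ)).sum := by
    have := sub_one_mul_padicValNat_factorial (p := 2) (2 * κ)
    simpa using this
  have hds : 0 < (Nat.digits 2 (2 * κ)).sum := digitsum_pos _ (by omega)
  -- combine: v C + v (2κ)! = v asc
  have hCfac : padicValNat 2 (Nat.choose (β + κ) (2 * κ)) + padicValNat 2 (Nat.factorial (2 * κ)) =
      padicValNat 2 ((m + 1).ascFactorial (2 * κ)) := by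
    rw [← hasc, padicValNat.mul (Nat.choose_pos (by omega)).ne' (Nat.factorial_ne_zero _)]
  -- v of the target
  have hvtarget : padicValNat 2 (Nat.choose (β + κ) (2 * κ) * 2 ^ (2 * κ)) =
      padicValNat 2 (Nat.choose (β + κ) (2 * κ)) + 2 * κ := by
    rw [padicValNat.mul (Nat.choose_pos (by omega)).ne' (by positivity),
      padicValNat.prime_pow]
  have hv2b : padicValNat 2 (2 * β * (β + 1)) =
      1 + padicValNat 2 β + padicValNat 2 (β + 1) := by
    rw [padicValNat.mul (by omega) (by omega), padicValNat.mul (by omega) (by omega),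
      padicValNat.self (by norm_num)]
  have hkey : padicValNat 2 (Nat.choose (β + κ) (2 * κ) * 2 ^ (2 * κ)) ≥
      padicValNat 2 (2 * β * (β + 1)) + κ - 1 := by
    rw [hvtarget, hv2b]
    rw [hvasc, hsplit] at hCfac
    omega
  refine ⟨hkey, ?_⟩
  rw [padicValNat_dvd_iff_le (Nat.mul_ne_zero (Nat.choose_pos (show 2 * κ ≤ β + κ by omega)).ne' (by positivity))]
  omega
end
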